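/- Consider the coupled error dynamics ȧ̃_i = -Γ(S_i(t) ã_i) - Γ ζ Σ_j l_{ij}(ã_i - ã_j + a - a) for i = 1,...,N, i.e., the adaptation law ȧ̂_i = -Γ(Λ_i â_i - λ_i) - Γζ Σ_j l_{ij}(â_i - â_j), with Γ positive definite, ζ > 0, (l_{ij}) weights of a connected graph with Laplacian L, Λ_i(t) = ∫_0^t K_i K_i^T dτ, λ_i(t) = ∫_0^t K_i φ_i dτ, φ_i = K_i^T a. Then V(t) = (1/2) Σ_i ã_i^T Γ^{-1} ã_i is nonincreasing, and V̇ = -Σ_i ã_i^T Λ_i(t) ã_i - ζ Σ_{α=1}^p (â^α)^T L â^α ≤ 0 where â^α ∈ R^N stacks the α-th parameter estimate of all agents. -/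

import Mathlib

open Matrix MeasureTheory

/-- Theorem 2's Lyapunov computation (paper): under the consensus adaptation law
`ȧ̂ᵢ = -Γ(Λᵢ âᵢ - λᵢ) - Γζ ∑ⱼ lᵢⱼ(âᵢ - âⱼ)`, the function
`V = ½ ∑ᵢ ãᵢᵀ Γ⁻¹ ãᵢ` is nonincreasing and
`V̇ = -∑ᵢ ãᵢᵀ Λᵢ(t) ãᵢ - ζ ∑_α (â^α)ᵀ L â^α ≤ 0`. -/
theorem stmt12 {p N : ℕ}
    (Γ : Matrix (Fin p) (Fin p) ℝ) (hΓsymm : Γᵀ = Γ)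
    (hΓpd : ∀ v : Fin p → ℝ, v ≠ 0 → 0 < v ⬝ᵥ (Γ *ᵥ v))
    (ζ : ℝ) (hζ : 0 < ζ)
    (l : Fin N → Fin N → ℝ)
    (L : Matrix (Fin N) (Fin N) ℝ)
    -- `L` is the graph Laplacian of the (connected) weighted graph with weights `l i j`
    (hL : ∀ w : Fin N → ℝ, (∑ i, w i * ∑ j, l i j * (w i - w j)) = w ⬝ᵥ (L *ᵥ w))
    (hLpsd : ∀ w : Fin N → ℝ, 0 ≤ w ⬝ᵥ (L *ᵥ w))
    (K : Fin N → ℝ → Fin p → ℝ) (hK : ∀ i, Continuous (K i))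
    (a : Fin p → ℝ)
    (Λ : Fin N → ℝ → Matrix (Fin p) (Fin p) ℝ)
    (hΛ : ∀ i t b d, Λ i t b d = ∫ τ in (0 : ℝ)..t, K i τ b * K i τ d)
    (lam : Fin N → ℝ → Fin p → ℝ)
    (hlam : ∀ i t b, lam i t b = ∫ τ in (0 : ℝ)..t, K i τ b * (K i τ ⬝ᵥ a))
    (ahat : Fin N → ℝ → Fin p → ℝ)
    (hdyn : ∀ i t β, HasDerivAt (fun s => ahat i s β)
      ((-(Γ *ᵥ (Λ i t *ᵥ ahat i t - lam i t))
        - ζ • (Γ *ᵥ fun γ => ∑ j, l i j * (ahat i t γ - ahat j t γ))) β) t)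
    (V : ℝ → ℝ)
    (hV : ∀ t, V t = (1 / 2) * ∑ i, (ahat i t - a) ⬝ᵥ (Γ⁻¹ *ᵥ (ahat i t - a))) :
    AntitoneOn V (Set.Ici 0) ∧
      ∀ t ≥ (0 : ℝ),
        deriv V t = -(∑ i, (ahat i t - a) ⬝ᵥ (Λ i t *ᵥ (ahat i t - a)))
            - ζ * ∑ α : Fin p, (fun j => ahat j t α) ⬝ᵥ (L *ᵥ fun j => ahat j t α) ∧
          deriv V t ≤ 0 := by
  classical
  -- Γ is invertible and Γ⁻¹ is symmetric
  have hΓu : IsUnit Γ := by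
    rw [← Matrix.mulVec_injective_iff_isUnit]
    intro v w hvw
    by_contra hne
    have := hΓpd (v - w) (sub_ne_zero.mpr hne)
    rw [Matrix.mulVec_sub, hvw, sub_self, dotProduct_zero] at this
    exact lt_irrefl 0 this
  have hdet : IsUnit Γ.det := (Matrix.isUnit_iff_isUnit_det Γ).mp hΓu
  have hinv : Γ⁻¹ * Γ = 1 := Matrix.nonsing_inv_mul Γ hdet
  have hGis : Γ⁻¹ᵀ = Γ⁻¹ := by rw [Matrix.transpose_nonsing_inv, hΓsymm]
  have hKc : ∀ (i : Fin N) (b d : Fin p), Continuous fun τ => K i τ b * K i τ d := fun i b d =>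
    ((continuous_apply b).comp (hK i)).mul ((continuous_apply d).comp (hK i))
  -- the quadratic form of Λ is an integral of squares
  have hΛquad : ∀ (i : Fin N) (v : Fin p → ℝ) (t : ℝ),
      v ⬝ᵥ (Λ i t *ᵥ v) = ∫ τ in (0:ℝ)..t, (K i τ ⬝ᵥ v) * (K i τ ⬝ᵥ v) := by
    intro i v t
    have h1 : ∀ τ, (K i τ ⬝ᵥ v) * (K i τ ⬝ᵥ v) = ∑ b, ∑ d, (K i τ b * K i τ d) * (v b * v d) := by
      intro τ
      simp only [dotProduct, Finset.sum_mul, Finset.mul_sum]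
      congr 1; funext b; congr 1; funext d; ring
    simp_rw [h1]
    rw [intervalIntegral.integral_finset_sum]
    · simp only [dotProduct, Matrix.mulVec, hΛ]
      congr 1; funext b
      rw [intervalIntegral.integral_finset_sum]
      · simp only [intervalIntegral.integral_mul_const, dotProduct, Finset.mul_sum]
        congr 1; funext d; ring
      · intro d _
        exact (((hKc i b d).mul continuous_const)).intervalIntegrable _ _
    · intro b _
      apply Continuous.intervalIntegrable
      exact continuous_finset_sum _ fun d _ => (hKc i b d).mul continuous_const
  have hΛpsd : ∀ (i : Fin N) (v : Fin p → ℝ), ∀ t ≥ (0:ℝ), 0 ≤ v ⬝ᵥ (Λ i t *ᵥ v) := by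
    intro i v t ht
    rw [hΛquad]
    exact intervalIntegral.integral_nonneg ht (fun τ _ => mul_self_nonneg _)
  -- lam = Λ a
  have hlamΛ : ∀ (i : Fin N) (t : ℝ), lam i t = Λ i t *ᵥ a := by
    intro i t
    funext b
    rw [hlam]
    have h1 : ∀ τ, K i τ b * (K i τ ⬝ᵥ a) = ∑ d, (K i τ b * K i τ d) * a d := by
      intro τ; simp only [dotProduct, Finset.mul_sum]; congr 1; funext d; ring
    simp_rw [h1]
    rw [intervalIntegral.integral_finset_sum]
    · simp only [Matrix.mulVec, dotProduct, hΛ]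
      simp [intervalIntegral.integral_mul_const]
    · intro d _
      exact ((hKc i b d).mul continuous_const).intervalIntegrable _ _
  -- quadratic form of L is invariant under constant shifts
  have hshift : ∀ (w : Fin N → ℝ) (c : ℝ),
      ((fun i => w i + c) ⬝ᵥ (L *ᵥ fun i => w i + c)) = w ⬝ᵥ (L *ᵥ w) := by
    intro w c
    have key : ∀ s : ℝ,
        ((fun i => w i + s) ⬝ᵥ (L *ᵥ fun i => w i + s))
          = w ⬝ᵥ (L *ᵥ w) + s * (∑ i, ∑ j, l i j * (w i - w j)) := by
      intro s
      rw [← hL w, ← hL (fun i => w i + s)]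
      simp only [add_sub_add_right_eq_sub, add_mul, Finset.sum_add_distrib, Finset.mul_sum]
    have hD : (∑ i, ∑ j, l i j * (w i - w j)) = 0 := by
      by_contra hD0
      have h1 : 0 ≤ w ⬝ᵥ (L *ᵥ w)
          + (-(w ⬝ᵥ (L *ᵥ w) + 1) / (∑ i, ∑ j, l i j * (w i - w j)))
            * (∑ i, ∑ j, l i j * (w i - w j)) := by
        rw [← key]; exact hLpsd _
      rw [div_mul_cancel₀ _ hD0] at h1
      linarith
    rw [key c, hD, mul_zero, add_zero]
  -- abbreviation for the derivative vector
  set d : Fin N → ℝ → Fin p → ℝ := fun i t =>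
    (-(Γ *ᵥ (Λ i t *ᵥ ahat i t - lam i t))
      - ζ • (Γ *ᵥ fun γ => ∑ j, l i j * (ahat i t γ - ahat j t γ))) with hd
  -- V has derivative
  have hVd : ∀ t, HasDerivAt V
      ((1/2) * ∑ i, ∑ β, (d i t β * (∑ γ, Γ⁻¹ β γ * (ahat i t γ - a γ))
        + (ahat i t β - a β) * (∑ γ, Γ⁻¹ β γ * d i t γ))) t := by
    intro t
    have hfun : V = fun s => (1/2) * ∑ i, ∑ β,
        (ahat i s β - a β) * (∑ γ, Γ⁻¹ β γ * (ahat i s γ - a γ)) := by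
      funext s
      rw [hV s]
      simp [dotProduct, Matrix.mulVec]
    rw [hfun]
    apply HasDerivAt.const_mul
    apply HasDerivAt.fun_sum
    intro i _
    apply HasDerivAt.fun_sum
    intro β _
    exact ((hdyn i t β).sub_const (a β)).mul
      (HasDerivAt.fun_sum fun γ _ => (((hdyn i t γ).sub_const (a γ)).const_mul _))
  -- symmetry of Γ⁻¹ quadratic form
  have hsymm : ∀ (x y : Fin p → ℝ), x ⬝ᵥ (Γ⁻¹ *ᵥ y) = y ⬝ᵥ (Γ⁻¹ *ᵥ x) := by
    intro x y
    rw [Matrix.dotProduct_mulVec, ← Matrix.mulVec_transpose, hGis, dotProduct_comm]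
  -- Γ⁻¹ applied to the derivative vector
  have hGinvd : ∀ (i : Fin N) (t : ℝ),
      Γ⁻¹ *ᵥ d i t = -(Λ i t *ᵥ (ahat i t - a))
        - ζ • (fun γ => ∑ j, l i j * (ahat i t γ - ahat j t γ)) := by
    intro i t
    have h1 : d i t = Γ *ᵥ (-(Λ i t *ᵥ (ahat i t - a))
        - ζ • (fun γ => ∑ j, l i j * (ahat i t γ - ahat j t γ))) := by
      rw [hd]
      simp only [Matrix.mulVec_sub, Matrix.mulVec_neg, Matrix.mulVec_smul, hlamΛ]
    rw [h1, Matrix.mulVec_mulVec, hinv, Matrix.one_mulVec]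
  -- the derivative simplifies to the asserted form
  have hderiv : ∀ t, HasDerivAt V
      (-(∑ i, (ahat i t - a) ⬝ᵥ (Λ i t *ᵥ (ahat i t - a)))
        - ζ * ∑ α : Fin p, (fun j => ahat j t α) ⬝ᵥ (L *ᵥ fun j => ahat j t α)) t := by
    intro t
    have h := hVd t
    have he : (1/2) * (∑ i, ∑ β, (d i t β * (∑ γ, Γ⁻¹ β γ * (ahat i t γ - a γ))
        + (ahat i t β - a β) * (∑ γ, Γ⁻¹ β γ * d i t γ)))
        = -(∑ i, (ahat i t - a) ⬝ᵥ (Λ i t *ᵥ (ahat i t - a)))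
          - ζ * ∑ α : Fin p, (fun j => ahat j t α) ⬝ᵥ (L *ᵥ fun j => ahat j t α) := by
      have h2 : ∀ i : Fin N, (∑ β, (d i t β * (∑ γ, Γ⁻¹ β γ * (ahat i t γ - a γ))
          + (ahat i t β - a β) * (∑ γ, Γ⁻¹ β γ * d i t γ)))
          = 2 * ((ahat i t - a) ⬝ᵥ (Γ⁻¹ *ᵥ d i t)) := by
        intro i
        have e1 : (∑ β, d i t β * (∑ γ, Γ⁻¹ β γ * (ahat i t γ - a γ)))
            = d i t ⬝ᵥ (Γ⁻¹ *ᵥ (ahat i t - a)) := by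
          simp [dotProduct, Matrix.mulVec]
        have e2 : (∑ β, (ahat i t β - a β) * (∑ γ, Γ⁻¹ β γ * d i t γ))
            = (ahat i t - a) ⬝ᵥ (Γ⁻¹ *ᵥ d i t) := by
          simp [dotProduct, Matrix.mulVec]
        rw [Finset.sum_add_distrib, e1, e2, hsymm]
        ring
      simp_rw [h2]
      rw [← Finset.mul_sum, ← mul_assoc]
      have h12 : (1/2 : ℝ) * 2 = 1 := by norm_num
      rw [h12, one_mul]
      -- now: ∑ i, (ahat i t - a) ⬝ᵥ (Γ⁻¹ *ᵥ d i t) = ...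
      have h3 : ∀ i : Fin N, (ahat i t - a) ⬝ᵥ (Γ⁻¹ *ᵥ d i t)
          = -((ahat i t - a) ⬝ᵥ (Λ i t *ᵥ (ahat i t - a)))
            - ζ * ((ahat i t - a) ⬝ᵥ (fun γ => ∑ j, l i j * (ahat i t γ - ahat j t γ))) := by
        intro i
        rw [hGinvd, dotProduct_sub, dotProduct_neg, dotProduct_smul,
          smul_eq_mul]
      simp_rw [h3]
      rw [Finset.sum_sub_distrib, ← Finset.sum_neg_distrib, ← Finset.mul_sum]
      congr 1
      congr 1
      -- ∑ i, ã_i ⬝ consensus_i = ∑ α, â^α ⬝ L â^α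
      have h4 : (∑ i, (ahat i t - a) ⬝ᵥ (fun γ => ∑ j, l i j * (ahat i t γ - ahat j t γ)))
          = ∑ α : Fin p, ∑ i, (ahat i t α - a α) * ∑ j, l i j * ((ahat i t α - a α) - (ahat j t α - a α)) := by
        rw [Finset.sum_comm]
        congr 1; funext i
        simp only [dotProduct, Pi.sub_apply, sub_sub_sub_cancel_right]
      rw [h4]
      congr 1; funext α
      rw [hL (fun i => ahat i t α - a α)]
      have h5 : (fun i => ahat i t α) = fun i => (ahat i t α - a α) + a α := by
        funext i; ring
      rw [h5, hshift]
    rw [he] at h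
    exact h
  refine ⟨?_, fun t ht => ⟨(hderiv t).deriv, ?_⟩⟩
  · -- antitone
    have hdiff : ∀ t : ℝ, DifferentiableAt ℝ V t := fun t => (hderiv t).differentiableAt
    apply antitoneOn_of_deriv_nonpos (convex_Ici 0)
    · exact (Differentiable.continuous (fun t => hdiff t)).continuousOn
    · intro x _
      exact (hdiff x).differentiableWithinAt
    · intro x hx
      rw [interior_Ici] at hx
      rw [(hderiv x).deriv]
      have h1 : 0 ≤ ∑ i, (ahat i x - a) ⬝ᵥ (Λ i x *ᵥ (ahat i x - a)) :=
        Finset.sum_nonneg fun i _ => hΛpsd i _ x hx.le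
      have h2 : 0 ≤ ∑ α : Fin p, (fun j => ahat j x α) ⬝ᵥ (L *ᵥ fun j => ahat j x α) :=
        Finset.sum_nonneg fun α _ => hLpsd _
      nlinarith
  · rw [(hderiv t).deriv]
    have h1 : 0 ≤ ∑ i, (ahat i t - a) ⬝ᵥ (Λ i t *ᵥ (ahat i t - a)) :=
      Finset.sum_nonneg fun i _ => hΛpsd i _ t ht
    have h2 : 0 ≤ ∑ α : Fin p, (fun j => ahat j t α) ⬝ᵥ (L *ᵥ fun j => ahat j t α) :=
      Finset.sum_nonneg fun α _ => hLpsd _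
    nlinarith
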